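/- arXiv:math/0703714 — 2 statements merged into one kernel-verified Lean document; each statement's English description precedes it below -/
import Mathlib

section
/- Let S,K>0, r∈ℝ, σ>0, T>0, and let p(x) = (1/(σ√(2πT))) exp(-(x+σ²T/2)²/(2σ²T)). Then ∫_{log(K/S)-rT}^{∞} (S e^{x+rT} - K) p(x) dx = S e^{rT} N(d₁) - K N(d₂), where N is the standard normal CDF, d₁ = (log(S/K) + (r+σ²/2)T)/(σ√T) and d₂ = (log(S/K) + (r-σ²/2)T)/(σ√T). -/
open MeasureTheory Real

/-- Standard normal cumulative distribution function. -/
noncomputable def stdNormalCDF (x : ℝ) : ℝ :=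
  ∫ t in Set.Iic x, Real.exp (-t ^ 2 / 2) / Real.sqrt (2 * Real.pi)

lemma shiftIoi (f : ℝ → ℝ) (a d : ℝ) :
    ∫ x in Set.Ioi a, f (x + d) = ∫ x in Set.Ioi (a + d), f x := by
  have h := (measurePreserving_add_right (volume : Measure ℝ) d).setIntegral_preimage_emb
    (MeasurableEquiv.addRight d).measurableEmbedding f (Set.Ioi (a + d))
  simpa [Set.preimage_add_const_Ioi] using h

lemma gauss_integrable (c s : ℝ) (hs : 0 < s) :
    Integrable (fun x : ℝ => Real.exp (-(x - c) ^ 2 / (2 * s ^ 2)) / (s * Real.sqrt (2 * Real.pi))) := by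
  have hb : (0:ℝ) < 1 / (2 * s ^ 2) := by positivity
  have h1 : Integrable (fun x : ℝ => Real.exp (-(1 / (2 * s ^ 2)) * x ^ 2)) :=
    integrable_exp_neg_mul_sq hb
  have h2 := (h1.comp_sub_right c).div_const (s * Real.sqrt (2 * Real.pi))
  convert h2 using 2 with x
  congr 1
  field_simp

lemma gauss_Ioi (a c s : ℝ) (hs : 0 < s) :
    (∫ x in Set.Ioi a, Real.exp (-(x - c) ^ 2 / (2 * s ^ 2)) / (s * Real.sqrt (2 * Real.pi)))
      = stdNormalCDF ((c - a) / s) := by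
  have h1 : (∫ x in Set.Ioi a, Real.exp (-(x - c) ^ 2 / (2 * s ^ 2)) / (s * Real.sqrt (2 * Real.pi)))
      = ∫ x in Set.Ioi (a - c), Real.exp (-x ^ 2 / (2 * s ^ 2)) / (s * Real.sqrt (2 * Real.pi)) := by
    have := shiftIoi (fun x => Real.exp (-x ^ 2 / (2 * s ^ 2)) / (s * Real.sqrt (2 * Real.pi))) a (-c)
    simpa [sub_eq_add_neg] using this
  rw [h1]
  have hptw : ∀ x : ℝ, Real.exp (-x ^ 2 / (2 * s ^ 2)) / (s * Real.sqrt (2 * Real.pi))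
      = (Real.exp (-(x * s⁻¹) ^ 2 / 2) / Real.sqrt (2 * Real.pi)) * s⁻¹ := by
    intro x
    have h : -(x * s⁻¹) ^ 2 / 2 = -x ^ 2 / (2 * s ^ 2) := by
      rw [mul_pow, inv_pow]
      field_simp
    rw [h]
    field_simp
  rw [show (∫ x in Set.Ioi (a - c), Real.exp (-x ^ 2 / (2 * s ^ 2)) / (s * Real.sqrt (2 * Real.pi)))
      = ∫ x in Set.Ioi (a - c),
          (Real.exp (-(x * s⁻¹) ^ 2 / 2) / Real.sqrt (2 * Real.pi)) * s⁻¹ by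
    exact setIntegral_congr_fun measurableSet_Ioi fun x _ => hptw x]
  rw [integral_mul_const]
  rw [integral_comp_mul_right_Ioi (fun y => Real.exp (-y ^ 2 / 2) / Real.sqrt (2 * Real.pi))
    (a - c) (inv_pos.mpr hs)]
  have hneg := integral_comp_neg_Ioi ((a - c) * s⁻¹)
    (fun y => Real.exp (-y ^ 2 / 2) / Real.sqrt (2 * Real.pi))
  simp only [neg_sq] at hneg
  rw [smul_eq_mul, inv_inv, mul_comm s, mul_assoc, mul_inv_cancel₀ hs.ne', mul_one, hneg]
  unfold stdNormalCDF
  congr 1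
  field_simp
  rw [← neg_div, neg_sub]

theorem call_payoff_expectation (S K r σ T : ℝ) (hS : 0 < S) (hK : 0 < K)
    (hσ : 0 < σ) (hT : 0 < T) :
    ∫ x in Set.Ioi (Real.log (K / S) - r * T),
        (S * Real.exp (x + r * T) - K) *
          ((1 / (σ * Real.sqrt (2 * Real.pi * T))) *
            Real.exp (-(x + σ ^ 2 * T / 2) ^ 2 / (2 * σ ^ 2 * T))) =
      S * Real.exp (r * T) *
          stdNormalCDF ((Real.log (S / K) + (r + σ ^ 2 / 2) * T) / (σ * Real.sqrt T)) -
        K * stdNormalCDF ((Real.log (S / K) + (r - σ ^ 2 / 2) * T) / (σ * Real.sqrt T)) := by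
  have hsT : (0:ℝ) < σ * Real.sqrt T := by positivity
  have hs2 : (σ * Real.sqrt T) ^ 2 = σ ^ 2 * T := by
    rw [mul_pow, Real.sq_sqrt hT.le]
  have hden : σ * Real.sqrt (2 * Real.pi * T)
      = (σ * Real.sqrt T) * Real.sqrt (2 * Real.pi) := by
    rw [Real.sqrt_mul (by positivity : (0:ℝ) ≤ 2 * Real.pi) T]; ring
  set a := Real.log (K / S) - r * T with ha
  have hptw : ∀ x : ℝ,
      (S * Real.exp (x + r * T) - K) *
          ((1 / (σ * Real.sqrt (2 * Real.pi * T))) *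
            Real.exp (-(x + σ ^ 2 * T / 2) ^ 2 / (2 * σ ^ 2 * T)))
      = S * Real.exp (r * T) *
          (Real.exp (-(x - σ ^ 2 * T / 2) ^ 2 / (2 * (σ * Real.sqrt T) ^ 2)) /
            ((σ * Real.sqrt T) * Real.sqrt (2 * Real.pi)))
        - K * (Real.exp (-(x - -(σ ^ 2 * T / 2)) ^ 2 / (2 * (σ * Real.sqrt T) ^ 2)) /
            ((σ * Real.sqrt T) * Real.sqrt (2 * Real.pi))) := by
    intro x
    have harg : -(x - -(σ ^ 2 * T / 2)) ^ 2 / (2 * (σ * Real.sqrt T) ^ 2)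
        = -(x + σ ^ 2 * T / 2) ^ 2 / (2 * σ ^ 2 * T) := by
      rw [hs2]; ring_nf
    have htilt : Real.exp (x + r * T) * Real.exp (-(x + σ ^ 2 * T / 2) ^ 2 / (2 * σ ^ 2 * T))
        = Real.exp (r * T) *
            Real.exp (-(x - σ ^ 2 * T / 2) ^ 2 / (2 * (σ * Real.sqrt T) ^ 2)) := by
      rw [hs2, ← Real.exp_add, ← Real.exp_add]
      congr 1
      have hv : σ ^ 2 * T ≠ 0 := by positivity
      field_simp
      ring
    rw [hden, harg]
    have key : (S * Real.exp (x + r * T) - K) *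
        (1 / ((σ * Real.sqrt T) * Real.sqrt (2 * Real.pi)) *
          Real.exp (-(x + σ ^ 2 * T / 2) ^ 2 / (2 * σ ^ 2 * T)))
        = S * (Real.exp (x + r * T) * Real.exp (-(x + σ ^ 2 * T / 2) ^ 2 / (2 * σ ^ 2 * T))) /
            ((σ * Real.sqrt T) * Real.sqrt (2 * Real.pi))
          - K * (Real.exp (-(x + σ ^ 2 * T / 2) ^ 2 / (2 * σ ^ 2 * T)) /
            ((σ * Real.sqrt T) * Real.sqrt (2 * Real.pi))) := by ring
    rw [key, htilt]
    ring
  rw [setIntegral_congr_fun measurableSet_Ioi (fun x _ => hptw x)]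
  rw [integral_sub
    (((gauss_integrable (σ ^ 2 * T / 2) (σ * Real.sqrt T) hsT).const_mul
      (S * Real.exp (r * T))).integrableOn)
    (((gauss_integrable (-(σ ^ 2 * T / 2)) (σ * Real.sqrt T) hsT).const_mul K).integrableOn)]
  rw [MeasureTheory.integral_const_mul, MeasureTheory.integral_const_mul]
  rw [gauss_Ioi a (σ ^ 2 * T / 2) (σ * Real.sqrt T) hsT,
    gauss_Ioi a (-(σ ^ 2 * T / 2)) (σ * Real.sqrt T) hsT]
  have hlog : Real.log (S / K) = -Real.log (K / S) := by
    rw [← Real.log_inv, inv_div]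
  have e1 : (σ ^ 2 * T / 2 - a) / (σ * Real.sqrt T)
      = (Real.log (S / K) + (r + σ ^ 2 / 2) * T) / (σ * Real.sqrt T) := by
    rw [ha, hlog]; ring_nf
  have e2 : (-(σ ^ 2 * T / 2) - a) / (σ * Real.sqrt T)
      = (Real.log (S / K) + (r - σ ^ 2 / 2) * T) / (σ * Real.sqrt T) := by
    rw [ha, hlog]; ring_nf
  rw [e1, e2]
end

section
/- The Black-Scholes price satisfies max(S - K e^{-rT}, 0) < S N(d₁) - K e^{-rT} N(d₂) < S for all S,K>0, σ>0, T>0, r∈ℝ. -/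
open MeasureTheory Real Set

noncomputable def phi (t : ℝ) : ℝ := Real.exp (-t ^ 2 / 2) / Real.sqrt (2 * Real.pi)

lemma phi_pos (t : ℝ) : 0 < phi t := by
  apply div_pos (Real.exp_pos _)
  exact Real.sqrt_pos.2 (by positivity)

lemma phi_integrable : Integrable phi := by
  have h : Integrable (fun t : ℝ => Real.exp (-(1/2 : ℝ) * t ^ 2)) :=
    integrable_exp_neg_mul_sq (by norm_num)
  have := h.div_const (Real.sqrt (2 * Real.pi))
  refine this.congr (Filter.Eventually.of_forall fun t => ?_)
  simp [phi]; ring_nf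

lemma integral_phi : ∫ t, phi t = 1 := by
  have h : ∫ t : ℝ, Real.exp (-(1/2 : ℝ) * t ^ 2) = Real.sqrt (Real.pi / (1/2)) :=
    integral_gaussian (1/2)
  have h2 : ∫ t, phi t = (∫ t : ℝ, Real.exp (-(1/2 : ℝ) * t ^ 2)) / Real.sqrt (2 * Real.pi) := by
    rw [← integral_div]
    congr 1; ext t; simp only [phi]; ring_nf
  rw [h2, h]
  rw [div_eq_one_iff_eq (by positivity)]
  congr 1; ring

lemma stdNormalCDF_eq (x : ℝ) : stdNormalCDF x = ∫ t in Set.Iic x, phi t := rfl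

lemma stdNormalCDF_pos (x : ℝ) : 0 < stdNormalCDF x := by
  rw [stdNormalCDF_eq]
  rw [setIntegral_pos_iff_support_of_nonneg_ae
    (Filter.Eventually.of_forall fun t => (phi_pos t).le) phi_integrable.integrableOn]
  have : Function.support phi ∩ Iic x = Iic x := by
    rw [inter_eq_right]
    intro t _; exact (phi_pos t).ne'
  rw [this]
  simp [Real.volume_Iic]

lemma stdNormalCDF_lt_one (x : ℝ) : stdNormalCDF x < 1 := by
  have hadd : stdNormalCDF x + ∫ t in Set.Ioi x, phi t = 1 := by
    rw [stdNormalCDF_eq, ← integral_phi, ← compl_Iic]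
    exact integral_add_compl measurableSet_Iic phi_integrable
  have hpos : 0 < ∫ t in Set.Ioi x, phi t := by
    rw [setIntegral_pos_iff_support_of_nonneg_ae
      (Filter.Eventually.of_forall fun t => (phi_pos t).le) phi_integrable.integrableOn]
    have : Function.support phi ∩ Ioi x = Ioi x := by
      rw [inter_eq_right]; intro t _; exact (phi_pos t).ne'
    rw [this]; simp [Real.volume_Ioi]
  linarith

lemma phi_shift_integrable (a : ℝ) : Integrable (fun u => phi (u + a)) :=
  (measurePreserving_add_right (volume : Measure ℝ) a).integrable_comp_emb
    (MeasurableEquiv.addRight a).measurableEmbedding |>.2 phi_integrable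

lemma integral_phi_shift_Iic (a x : ℝ) :
    ∫ u in Set.Iic x, phi (u + a) = ∫ t in Set.Iic (x + a), phi t := by
  have h := (measurePreserving_add_right (volume : Measure ℝ) a).setIntegral_preimage_emb
    (MeasurableEquiv.addRight a).measurableEmbedding phi (Set.Iic (x + a))
  simpa [MeasurableEquiv.addRight, Set.preimage_add_const_Iic] using h

lemma integral_phi_shift_Ioi (a x : ℝ) :
    ∫ u in Set.Ioi x, phi (u + a) = ∫ t in Set.Ioi (x + a), phi t := by
  have h := (measurePreserving_add_right (volume : Measure ℝ) a).setIntegral_preimage_emb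
    (MeasurableEquiv.addRight a).measurableEmbedding phi (Set.Ioi (x + a))
  simpa [MeasurableEquiv.addRight, Set.preimage_add_const_Ioi] using h

lemma integral_phi_Ioi (x : ℝ) : ∫ t in Set.Ioi x, phi t = 1 - stdNormalCDF x := by
  have hadd : stdNormalCDF x + ∫ t in Set.Ioi x, phi t = 1 := by
    rw [stdNormalCDF_eq, ← integral_phi, ← Set.compl_Iic]
    exact integral_add_compl measurableSet_Iic phi_integrable
  linarith

theorem blackScholes_no_arbitrage_bounds (S K r σ T : ℝ) (hS : 0 < S) (hK : 0 < K)
    (hσ : 0 < σ) (hT : 0 < T) :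
    max (S - K * Real.exp (-(r * T))) 0 <
        S * stdNormalCDF ((Real.log (S / K) + (r + σ ^ 2 / 2) * T) / (σ * Real.sqrt T)) -
          K * Real.exp (-(r * T)) *
            stdNormalCDF ((Real.log (S / K) + (r + σ ^ 2 / 2) * T) / (σ * Real.sqrt T)
              - σ * Real.sqrt T) ∧
      S * stdNormalCDF ((Real.log (S / K) + (r + σ ^ 2 / 2) * T) / (σ * Real.sqrt T)) -
          K * Real.exp (-(r * T)) *
            stdNormalCDF ((Real.log (S / K) + (r + σ ^ 2 / 2) * T) / (σ * Real.sqrt T)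
              - σ * Real.sqrt T) < S := by
  set a : ℝ := σ * Real.sqrt T with ha_def
  have ha : 0 < a := mul_pos hσ (Real.sqrt_pos.2 hT)
  have ha2 : a ^ 2 = σ ^ 2 * T := by
    rw [ha_def, mul_pow, Real.sq_sqrt hT.le]
  set d1 : ℝ := (Real.log (S / K) + (r + σ ^ 2 / 2) * T) / a with hd1_def
  set d2 : ℝ := d1 - a with hd2_def
  set c : ℝ := K * Real.exp (-(r * T)) with hc_def
  have hc : 0 < c := mul_pos hK (Real.exp_pos _)
  have had1 : a * d1 = Real.log (S / K) + r * T + a ^ 2 / 2 := by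
    rw [hd1_def, mul_div_cancel₀ _ ha.ne']
    rw [ha2]; ring
  -- key pointwise identity
  have hkey : ∀ u : ℝ, S * phi (u + a) = c * phi u * Real.exp (a * (d2 - u)) := by
    intro u
    have hexp : S * Real.exp (-(u + a) ^ 2 / 2)
        = c * Real.exp (-u ^ 2 / 2) * Real.exp (a * (d2 - u)) := by
      have hlog : Real.log (S / K) = Real.log S - Real.log K :=
        Real.log_div hS.ne' hK.ne'
      have h2 : a * d2 = Real.log S - Real.log K + r * T - a ^ 2 / 2 := by
        rw [hd2_def, mul_sub, had1, hlog]; ring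
      rw [hc_def]
      rw [← Real.exp_log hS, ← Real.exp_log hK, ← Real.exp_add, ← Real.exp_add, ← Real.exp_add,
        ← Real.exp_add, Real.exp_eq_exp]
      linear_combination -h2
    simp only [phi]
    field_simp
    simp only [neg_div] at hexp
    linear_combination hexp
  -- integrability
  have hint1 : Integrable (fun u => S * phi (u + a)) := (phi_shift_integrable a).const_mul S
  have hint2 : Integrable (fun u => c * phi u) := phi_integrable.const_mul c
  -- first strict inequality : S * N d1 > c * N d2
  have hI1 : 0 < ∫ u in Set.Iic d2, (S * phi (u + a) - c * phi u) := by
    rw [setIntegral_pos_iff_support_of_nonneg_ae]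
    · refine lt_of_lt_of_le ?_ (measure_mono ?_ : volume (Set.Iio d2) ≤ _)
      · simp [Real.volume_Iio]
      · intro u hu
        refine ⟨?_, Set.mem_Iic.2 (Set.mem_Iio.1 hu).le⟩
        have : c * phi u * 1 < c * phi u * Real.exp (a * (d2 - u)) := by
          apply mul_lt_mul_of_pos_left _ (mul_pos hc (phi_pos u))
          rw [← Real.exp_zero]
          exact Real.exp_lt_exp.2 (by nlinarith [Set.mem_Iio.1 hu])
        simp only [Function.mem_support]
        rw [hkey u]
        nlinarith [this]
    · rw [Filter.EventuallyLE, ae_restrict_iff' measurableSet_Iic]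
      refine Filter.Eventually.of_forall fun u hu => ?_
      rw [Pi.zero_apply, sub_nonneg, hkey u]
      have h1 : (1:ℝ) ≤ Real.exp (a * (d2 - u)) := by
        rw [← Real.exp_zero]
        exact Real.exp_le_exp.2 (by nlinarith [hu.out])
      nlinarith [mul_pos hc (phi_pos u)]
    · exact (hint1.sub hint2).integrableOn
  -- second strict inequality : c * (1 - N d2) > S * (1 - N d1)
  have hI2 : 0 < ∫ u in Set.Ioi d2, (c * phi u - S * phi (u + a)) := by
    rw [setIntegral_pos_iff_support_of_nonneg_ae]
    · refine lt_of_lt_of_le ?_ (measure_mono ?_ : volume (Set.Ioi d2) ≤ _)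
      · simp [Real.volume_Ioi]
      · intro u hu
        refine ⟨?_, hu⟩
        have : c * phi u * Real.exp (a * (d2 - u)) < c * phi u * 1 := by
          apply mul_lt_mul_of_pos_left _ (mul_pos hc (phi_pos u))
          rw [← Real.exp_zero]
          exact Real.exp_lt_exp.2 (by nlinarith [hu.out])
        simp only [Function.mem_support]
        rw [hkey u]
        nlinarith [this]
    · rw [Filter.EventuallyLE, ae_restrict_iff' measurableSet_Ioi]
      refine Filter.Eventually.of_forall fun u hu => ?_
      rw [Pi.zero_apply, sub_nonneg, hkey u]
      have h1 : Real.exp (a * (d2 - u)) ≤ 1 := by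
        rw [← Real.exp_zero]
        exact Real.exp_le_exp.2 (by nlinarith [hu.out])
      nlinarith [mul_pos hc (phi_pos u)]
    · exact (hint2.sub hint1).integrableOn
  -- rewrite the integrals
  have e1 : ∫ u in Set.Iic d2, (S * phi (u + a) - c * phi u)
      = S * stdNormalCDF d1 - c * stdNormalCDF d2 := by
    rw [integral_sub hint1.integrableOn hint2.integrableOn,
      integral_const_mul, integral_const_mul, integral_phi_shift_Iic]
    have : d2 + a = d1 := by rw [hd2_def]; ring
    rw [this, ← stdNormalCDF_eq, ← stdNormalCDF_eq]
  have e2 : ∫ u in Set.Ioi d2, (c * phi u - S * phi (u + a))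
      = c * (1 - stdNormalCDF d2) - S * (1 - stdNormalCDF d1) := by
    rw [integral_sub hint2.integrableOn hint1.integrableOn,
      integral_const_mul, integral_const_mul, integral_phi_shift_Ioi]
    have : d2 + a = d1 := by rw [hd2_def]; ring
    rw [this, integral_phi_Ioi, integral_phi_Ioi]
  rw [e1] at hI1
  rw [e2] at hI2
  have hN1 : stdNormalCDF d1 < 1 := stdNormalCDF_lt_one d1
  have hN2 : 0 < stdNormalCDF d2 := stdNormalCDF_pos d2
  refine ⟨max_lt (by nlinarith) (by nlinarith), by nlinarith⟩
end
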